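/- Let u, w ≥ 0 be reals, t > 1, y > 0, and n_s ≥ 2. Then (1 + (uw)^{(t−1)/2} y²)^{−n_s} − [(1 + u^{t−1}y²)(1 + w^{t−1}y²)]^{−n_s/2} ≤ (n_s/2) · (|u^{(t−1)/2} − w^{(t−1)/2}|² / (u^{t−1} + w^{t−1})) · (1 + (uw)^{(t−1)/2} y²)^{−n_s}, provided u^{t−1} + w^{t−1} > 0. -/

import Mathlib

lemma aux_pow13 (s r m : ℝ) (hr0 : 0 ≤ r) (hrs : r ≤ s) (hm : 1 ≤ m) :
    s ^ m - r ^ m ≤ m * (s - r) * s ^ (m - 1) := by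
  rcases eq_or_lt_of_le (hr0.trans hrs) with hs | hs
  · have hs' : s = 0 := hs.symm
    have hr' : r = 0 := le_antisymm (hs' ▸ hrs) hr0
    subst hs'; subst hr'
    simp [Real.zero_rpow (by linarith : m ≠ 0)]
  · have hds : 0 ≤ r / s := div_nonneg hr0 hs.le
    have h1 : (-1:ℝ) ≤ r / s - 1 := by linarith
    have hb := one_add_mul_self_le_rpow_one_add h1 hm
    have key : 1 - (r / s) ^ m ≤ m * (1 - r / s) := by
      have : (1 + (r / s - 1)) = r / s := by ring
      rw [this] at hb; linarith
    have hsm : 0 < s ^ m := Real.rpow_pos_of_pos hs m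
    have hdiv : (r / s) ^ m = r ^ m / s ^ m := Real.div_rpow hr0 hs.le m
    have hsm1 : s ^ (m - 1) = s ^ m / s := by
      rw [Real.rpow_sub hs, Real.rpow_one]
    rw [hdiv] at key
    have h2 : s ^ m - r ^ m ≤ m * (1 - r / s) * s ^ m := by
      have := mul_le_mul_of_nonneg_right key hsm.le
      calc s ^ m - r ^ m = (1 - r ^ m / s ^ m) * s ^ m := by field_simp
        _ ≤ m * (1 - r / s) * s ^ m := this
    calc s ^ m - r ^ m ≤ m * (1 - r / s) * s ^ m := h2
      _ = m * (s - r) * s ^ (m - 1) := by rw [hsm1]; field_simp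

theorem stmt_13 (u w t y ns : ℝ) (hu : 0 ≤ u) (hw : 0 ≤ w) (ht : 1 < t) (hy : 0 < y)
    (hns : 2 ≤ ns) (hpos : 0 < u ^ (t - 1) + w ^ (t - 1)) :
    (1 + (u * w) ^ ((t - 1) / 2) * y ^ 2) ^ (-ns) -
        ((1 + u ^ (t - 1) * y ^ 2) * (1 + w ^ (t - 1) * y ^ 2)) ^ (-ns / 2) ≤
      (ns / 2) * (|u ^ ((t - 1) / 2) - w ^ ((t - 1) / 2)| ^ 2 / (u ^ (t - 1) + w ^ (t - 1)))
        * (1 + (u * w) ^ ((t - 1) / 2) * y ^ 2) ^ (-ns) := by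
  set a := u ^ ((t - 1) / 2) with ha
  set b := w ^ ((t - 1) / 2) with hb
  clear_value a b
  have ha0 : 0 ≤ a := ha ▸ Real.rpow_nonneg hu _
  have hb0 : 0 ≤ b := hb ▸ Real.rpow_nonneg hw _
  have ha2 : a ^ 2 = u ^ (t - 1) := by
    rw [ha, ← Real.rpow_natCast (u ^ ((t - 1) / 2)) 2, ← Real.rpow_mul hu]
    norm_num
  have hb2 : b ^ 2 = w ^ (t - 1) := by
    rw [hb, ← Real.rpow_natCast (w ^ ((t - 1) / 2)) 2, ← Real.rpow_mul hw]
    norm_num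
  have hab : (u * w) ^ ((t - 1) / 2) = a * b := by rw [ha, hb]; exact Real.mul_rpow hu hw
  rw [hab, ← ha2, ← hb2]
  rw [← ha2, ← hb2] at hpos
  set A : ℝ := 1 + a * b * y ^ 2 with hA
  clear_value A
  have hA0 : 0 < A := by rw [hA]; positivity
  set X : ℝ := A ^ 2 with hX
  clear_value X
  have hX0 : 0 < X := by rw [hX]; positivity
  set Y : ℝ := (1 + a ^ 2 * y ^ 2) * (1 + b ^ 2 * y ^ 2) with hY
  clear_value Y
  have hY0 : 0 < Y := by rw [hY]; positivity
  have hYX : Y - X = (a - b) ^ 2 * y ^ 2 := by rw [hY, hX, hA]; ring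
  have hXY : X ≤ Y := by nlinarith [sq_nonneg (a - b), sq_nonneg y]
  set m : ℝ := ns / 2 with hm
  clear_value m
  have hm1 : (1:ℝ) ≤ m := by rw [hm]; linarith
  have hinv : Y⁻¹ ≤ X⁻¹ := inv_anti₀ hX0 hXY
  have h1 := aux_pow13 X⁻¹ Y⁻¹ m (by positivity) hinv hm1
  have e1 : (X⁻¹) ^ m = X ^ (-m) := by
    rw [Real.inv_rpow hX0.le, ← Real.rpow_neg hX0.le]
  have e2 : (Y⁻¹) ^ m = Y ^ (-ns / 2) := by
    rw [Real.inv_rpow hY0.le, ← Real.rpow_neg hY0.le, hm, neg_div]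
  have eA : X ^ (-m) = A ^ (-ns) := by
    rw [hX, ← Real.rpow_natCast A 2, ← Real.rpow_mul hA0.le]
    norm_num [hm]
    ring_nf
  have e3 : (X⁻¹) ^ (m - 1) = X * X ^ (-m) := by
    rw [Real.inv_rpow hX0.le, ← Real.rpow_neg hX0.le]
    rw [show -(m - 1) = 1 + -m by ring, Real.rpow_add hX0, Real.rpow_one]
  rw [e1, e2, e3, eA] at h1
  have hAns : 0 < A ^ (-ns) := Real.rpow_pos_of_pos hA0 _
  have h2 : m * (X⁻¹ - Y⁻¹) * (X * A ^ (-ns)) = m * ((Y - X) / Y) * A ^ (-ns) := by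
    field_simp
  rw [h2] at h1
  refine h1.trans ?_
  have habsq : |a - b| ^ 2 = (a - b) ^ 2 := sq_abs _
  rw [habsq, hYX]
  have hfrac : (a - b) ^ 2 * y ^ 2 / Y ≤ (a - b) ^ 2 / (a ^ 2 + b ^ 2) := by
    rw [div_le_div_iff₀ hY0 hpos, hY]
    nlinarith [mul_nonneg (sq_nonneg (a - b)) (show (0:ℝ) ≤ 1 + a^2*b^2*y^4 by positivity)]
  have hm0 : 0 ≤ m := by linarith
  exact mul_le_mul_of_nonneg_right (mul_le_mul_of_nonneg_left hfrac hm0) hAns.le
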